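/- Super-solution criterion in the negative case: Let h : V → ℝ and c < 0. Then there exists a function u : V → ℝ satisfying −Δu(x) = h(x)e^{u(x)} − c for all x ∈ V if and only if there exists a super-solution, i.e. a function ψ : V → ℝ with Δψ(x) + h(x)e^{ψ(x)} − c ≤ 0 for all x ∈ V. -/

import Mathlib

open Finset Real

/-- The graph Laplacian: `Δu(x) = (1/μ x) * Σ_y ω x y * (u y - u x)`. -/
noncomputable def graphLap {V : Type*} [Fintype V] (ω : V → V → ℝ) (μ : V → ℝ)
    (u : V → ℝ) (x : V) : ℝ :=
  (1 / μ x) * ∑ y, ω x y * (u y - u x)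

/-- The integral of `f` over `V` with respect to the vertex measure `μ`. -/
noncomputable def graphInt {V : Type*} [Fintype V] (μ : V → ℝ) (f : V → ℝ) : ℝ :=
  ∑ x, f x * μ x

/-- Connectivity: any two distinct vertices are joined by a chain of positively
weighted edges. -/
def graphConn {V : Type*} (ω : V → V → ℝ) : Prop :=
  ∀ x y : V, x ≠ y → ∃ (m : ℕ) (p : ℕ → V), p 0 = x ∧ p m = y ∧
    ∀ i < m, 0 < ω (p i) (p (i + 1))

/-- The gradient form `Γ(u,v)(x)`. -/
noncomputable def graphGamma {V : Type*} [Fintype V] (ω : V → V → ℝ) (μ : V → ℝ)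
    (u v : V → ℝ) (x : V) : ℝ :=
  (1 / (2 * μ x)) * ∑ y, ω x y * (u y - u x) * (v y - v x)

/-- The length of the gradient: `|∇u|(x) = √(Γ(u,u)(x))`. -/
noncomputable def graphGradNorm {V : Type*} [Fintype V] (ω : V → V → ℝ) (μ : V → ℝ)
    (u : V → ℝ) (x : V) : ℝ :=
  Real.sqrt (graphGamma ω μ u u x)

/-- The functional `J_{h,f}(u) = ∫_V (½|∇u|² + f·u − h·e^u) dμ`. -/
noncomputable def Jfunc {V : Type*} [Fintype V] (ω : V → V → ℝ) (μ : V → ℝ)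
    (h f : V → ℝ) (u : V → ℝ) : ℝ :=
  graphInt μ (fun x => (1 / 2) * (graphGradNorm ω μ u x) ^ 2 + f x * u x - h x * Real.exp (u x))


noncomputable def Efun {V : Type*} [Fintype V] (ω : V → V → ℝ) (μ : V → ℝ)
    (h : V → ℝ) (c : ℝ) (u : V → ℝ) : ℝ :=
  (1/4) * ∑ x, ∑ y, ω x y * (u y - u x)^2 + ∑ x, μ x * (c * u x - h x * Real.exp (u x))

lemma Efun_continuous {V : Type*} [Fintype V] (ω : V → V → ℝ) (μ : V → ℝ)
    (h : V → ℝ) (c : ℝ) : Continuous (Efun ω μ h c) := by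
  unfold Efun
  fun_prop

lemma min_slope_right {g : ℝ → ℝ} {A B t0 D : ℝ} (hmin : IsMinOn g (Set.Icc A B) t0)
    (ht : t0 ∈ Set.Icc A B) (hd : HasDerivAt g D t0) (hB : t0 < B) : 0 ≤ D := by
  have hB' : B ∈ Set.Icc A B := ⟨ht.1.trans ht.2, le_rfl⟩
  have hcone : B - t0 ∈ posTangentConeAt (Set.Icc A B) t0 :=
    sub_mem_posTangentConeAt_of_segment_subset ((convex_Icc A B).segment_subset ht hB')
  have := (hmin.localize).hasFDerivWithinAt_nonneg
    hd.hasFDerivAt.hasFDerivWithinAt hcone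
  simp only [ContinuousLinearMap.smulRight_apply, ContinuousLinearMap.one_apply,
    ContinuousLinearMap.toSpanSingleton_apply, smul_eq_mul] at this
  nlinarith

lemma min_slope_left {g : ℝ → ℝ} {A B t0 D : ℝ} (hmin : IsMinOn g (Set.Icc A B) t0)
    (ht : t0 ∈ Set.Icc A B) (hd : HasDerivAt g D t0) (hA : A < t0) : D ≤ 0 := by
  have hA' : A ∈ Set.Icc A B := ⟨le_rfl, ht.1.trans ht.2⟩
  have hcone : A - t0 ∈ posTangentConeAt (Set.Icc A B) t0 :=
    sub_mem_posTangentConeAt_of_segment_subset ((convex_Icc A B).segment_subset ht hA')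
  have := (hmin.localize).hasFDerivWithinAt_nonneg
    hd.hasFDerivAt.hasFDerivWithinAt hcone
  simp only [ContinuousLinearMap.smulRight_apply, ContinuousLinearMap.one_apply,
    ContinuousLinearMap.toSpanSingleton_apply, smul_eq_mul] at this
  nlinarith


lemma Efun_hasDerivAt {V : Type*} [Fintype V] [DecidableEq V] (ω : V → V → ℝ) (μ : V → ℝ)
    (h : V → ℝ) (c : ℝ) (hsymm : ∀ x y, ω x y = ω y x) (u : V → ℝ) (x0 : V) :
    HasDerivAt (fun t => Efun ω μ h c (fun z => if z = x0 then t else u z))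
      (∑ y, ω x0 y * (u x0 - u y) + μ x0 * (c - h x0 * Real.exp (u x0))) (u x0) := by
  set e : V → ℝ := fun z => if z = x0 then 1 else 0 with he
  have hF : ∀ z, HasDerivAt (fun t : ℝ => if z = x0 then t else u z) (e z) (u x0) := by
    intro z
    by_cases hz : z = x0
    · simpa [he, hz] using hasDerivAt_id' (u x0)
    · simpa [he, hz] using hasDerivAt_const (u x0) (u z)
  have hFval : ∀ z, (if z = x0 then u x0 else u z) = u z := by
    intro z; split <;> simp_all
  have hquad : HasDerivAt
      (fun t => ∑ x, ∑ y, ω x y * ((if y = x0 then t else u y) - (if x = x0 then t else u x))^2)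
      (∑ x, ∑ y, ω x y * (2 * (u y - u x) * (e y - e x))) (u x0) := by
    apply HasDerivAt.fun_sum; intro x _
    apply HasDerivAt.fun_sum; intro y _
    have := (((hF y).sub (hF x)).pow 2).const_mul (ω x y)
    simpa [hFval] using this
  have hlin : HasDerivAt
      (fun t => ∑ x, μ x * (c * (if x = x0 then t else u x)
        - h x * Real.exp (if x = x0 then t else u x)))
      (∑ x, μ x * (c * e x - h x * (Real.exp (u x) * e x))) (u x0) := by
    apply HasDerivAt.fun_sum; intro x _
    have := (((hF x).const_mul c).sub (((hF x).exp).const_mul (h x))).const_mul (μ x)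
    simpa [hFval] using this
  have total := (hquad.const_mul (1/4 : ℝ)).add hlin
  have hval : (1/4 : ℝ) * (∑ x, ∑ y, ω x y * (2 * (u y - u x) * (e y - e x)))
      + ∑ x, μ x * (c * e x - h x * (Real.exp (u x) * e x))
      = ∑ y, ω x0 y * (u x0 - u y) + μ x0 * (c - h x0 * Real.exp (u x0)) := by
    have key1 : ∑ x, ∑ y, (2 * ω x y * (u y - u x)) * e y = ∑ x, 2 * ω x x0 * (u x0 - u x) := by
      apply Finset.sum_congr rfl; intro x _
      rw [Finset.sum_eq_single x0]
      · simp [he]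
      · intro b _ hb; simp [he, hb]
      · simp
    have key2 : ∑ x, ∑ y, (2 * ω x y * (u y - u x)) * e x = ∑ y, 2 * ω x0 y * (u y - u x0) := by
      rw [Finset.sum_eq_single x0]
      · simp [he]
      · intro b _ hb; simp [he, hb]
      · simp
    have split : ∑ x, ∑ y, ω x y * (2 * (u y - u x) * (e y - e x))
        = (∑ x, ∑ y, (2 * ω x y * (u y - u x)) * e y)
          - ∑ x, ∑ y, (2 * ω x y * (u y - u x)) * e x := by
      rw [← Finset.sum_sub_distrib]
      apply Finset.sum_congr rfl; intro x _
      rw [← Finset.sum_sub_distrib]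
      apply Finset.sum_congr rfl; intro y _
      ring
    have keysum : ∑ x, 2 * ω x x0 * (u x0 - u x) - ∑ y, 2 * ω x0 y * (u y - u x0)
        = 4 * ∑ y, ω x0 y * (u x0 - u y) := by
      rw [Finset.mul_sum, ← Finset.sum_sub_distrib]
      apply Finset.sum_congr rfl; intro y _
      rw [hsymm y x0]; ring
    have keylin : ∑ x, μ x * (c * e x - h x * (Real.exp (u x) * e x))
        = μ x0 * (c - h x0 * Real.exp (u x0)) := by
      rw [Finset.sum_eq_single x0]
      · simp [he]
      · intro b _ hb; simp [he, hb]
      · simp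
    rw [split, key1, key2, keysum, keylin]; ring
  rw [← hval]
  exact total

/-- Super-solution criterion in the negative case: for `c < 0`, the equation
`−Δu = h e^u − c` has a solution if and only if it has a super-solution. -/
theorem kazdan_warner_supersolution_criterion {V : Type*} [Fintype V] [Nonempty V]
    (ω : V → V → ℝ) (μ : V → ℝ)
    (hsymm : ∀ x y, ω x y = ω y x)
    (hnonneg : ∀ x y, 0 ≤ ω x y)
    (hconn : graphConn ω)
    (hμ : ∀ x, 0 < μ x)
    (h : V → ℝ) (c : ℝ) (hc : c < 0) :
    (∃ u : V → ℝ, ∀ x, -graphLap ω μ u x = h x * Real.exp (u x) - c) ↔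
      (∃ ψ : V → ℝ, ∀ x, graphLap ω μ ψ x + h x * Real.exp (ψ x) - c ≤ 0) := by
  constructor
  · rintro ⟨u, hu⟩
    exact ⟨u, fun x => by have := hu x; linarith⟩
  · rintro ⟨ψ, hψ⟩
    classical
    set H := Finset.univ.sup' Finset.univ_nonempty (fun x => |h x|) with hHdef
    have hH0 : 0 ≤ H := by
      rw [hHdef]
      exact le_trans (abs_nonneg _) (Finset.le_sup' (fun x => |h x|) (Finset.mem_univ (Classical.arbitrary V)))
    set a := min (Finset.univ.inf' Finset.univ_nonempty ψ) (Real.log (-c / (H+1))) with hadef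
    have haψ : ∀ x, a ≤ ψ x := fun x =>
      le_trans (min_le_left _ _) (Finset.inf'_le _ (Finset.mem_univ x))
    have hH1 : (0:ℝ) < H + 1 := by linarith
    have hsub : ∀ x, c ≤ h x * Real.exp a := by
      intro x
      have h1 : (0:ℝ) < Real.exp a := Real.exp_pos a
      have hea : Real.exp a ≤ -c/(H+1) := by
        calc Real.exp a ≤ Real.exp (Real.log (-c/(H+1))) := Real.exp_le_exp.2 (min_le_right _ _)
        _ = -c/(H+1) := Real.exp_log (div_pos (by linarith) hH1)
      have h2 : |h x| ≤ H := by
        rw [hHdef]; exact Finset.le_sup' (fun x => |h x|) (Finset.mem_univ x)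
      have e1 : |h x| * Real.exp a ≤ (H+1) * Real.exp a :=
        mul_le_mul_of_nonneg_right (by linarith) h1.le
      have e2 : (H+1) * Real.exp a ≤ (H+1) * (-c/(H+1)) := mul_le_mul_of_nonneg_left hea hH1.le
      have e3 : (H+1) * (-c/(H+1)) = -c := mul_div_cancel₀ _ hH1.ne'
      have e4 : -|h x| * Real.exp a ≤ h x * Real.exp a :=
        mul_le_mul_of_nonneg_right (neg_abs_le _) h1.le
      nlinarith
    set K : Set (V → ℝ) := Set.univ.pi (fun x => Set.Icc a (ψ x)) with hKdef
    have hKc : IsCompact K := isCompact_univ_pi fun x => isCompact_Icc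
    have hKne : ψ ∈ K := fun x _ => ⟨haψ x, le_rfl⟩
    obtain ⟨u, huK, hmin⟩ := hKc.exists_isMinOn ⟨ψ, hKne⟩ (Efun_continuous ω μ h c).continuousOn
    have hu1 : ∀ z, a ≤ u z ∧ u z ≤ ψ z := fun z => Set.mem_Icc.1 (huK z (Set.mem_univ z))
    refine ⟨u, fun x0 => ?_⟩
    have hD := Efun_hasDerivAt ω μ h c hsymm u x0
    set D := ∑ y, ω x0 y * (u x0 - u y) + μ x0 * (c - h x0 * Real.exp (u x0)) with hDdef
    have hμ0 : μ x0 ≠ 0 := (hμ x0).ne'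
    have hgmin : IsMinOn (fun t => Efun ω μ h c (fun z => if z = x0 then t else u z))
        (Set.Icc a (ψ x0)) (u x0) := by
      rw [isMinOn_iff]
      intro t ht
      have hupd : (fun z => if z = x0 then t else u z) ∈ K := by
        intro z _
        by_cases hz : z = x0
        · subst hz; simpa using ht
        · simpa [hz] using Set.mem_Icc.2 (hu1 z)
      have h1 : (fun z => if z = x0 then u x0 else u z) = u := by
        funext z; split <;> simp_all
      show Efun ω μ h c (fun z => if z = x0 then u x0 else u z) ≤ _
      rw [h1]
      exact isMinOn_iff.1 hmin _ hupd
    have hmem : u x0 ∈ Set.Icc a (ψ x0) := ⟨(hu1 x0).1, (hu1 x0).2⟩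
    have hlapval : μ x0 * graphLap ω μ u x0 = ∑ y, ω x0 y * (u y - u x0) := by
      rw [graphLap]; field_simp
    have hs : ∑ y, ω x0 y * (u x0 - u y) = -∑ y, ω x0 y * (u y - u x0) := by
      rw [← Finset.sum_neg_distrib]; exact Finset.sum_congr rfl fun y _ => by ring
    have hDeq : D = μ x0 * (-(graphLap ω μ u x0) + (c - h x0 * Real.exp (u x0))) := by
      rw [hDdef, hs, ← hlapval]; ring
    have ineq1 : h x0 * Real.exp (u x0) - c ≤ -graphLap ω μ u x0 := by
      rcases (hu1 x0).2.lt_or_eq with hlt | heq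
      · have h0 : 0 ≤ D := min_slope_right hgmin hmem hD hlt
        rw [hDeq] at h0
        nlinarith [hμ x0]
      · have hcomp : graphLap ω μ u x0 ≤ graphLap ω μ ψ x0 := by
          rw [graphLap, graphLap]
          apply mul_le_mul_of_nonneg_left _ (one_div_nonneg.mpr (hμ x0).le)
          apply Finset.sum_le_sum
          intro y _
          apply mul_le_mul_of_nonneg_left _ (hnonneg x0 y)
          have := (hu1 y).2
          linarith
        rw [heq]
        linarith [hψ x0]
    have ineq2 : -graphLap ω μ u x0 ≤ h x0 * Real.exp (u x0) - c := by
      rcases (hu1 x0).1.lt_or_eq with hlt | heq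
      · have h0 : D ≤ 0 := min_slope_left hgmin hmem hD hlt
        rw [hDeq] at h0
        nlinarith [hμ x0]
      · have hlap0 : 0 ≤ graphLap ω μ u x0 := by
          rw [graphLap]
          apply mul_nonneg (one_div_nonneg.mpr (hμ x0).le)
          exact Finset.sum_nonneg fun y _ =>
            mul_nonneg (hnonneg x0 y) (by linarith [(hu1 y).1])
        rw [← heq]
        linarith [hsub x0]
    linarith
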